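/- arXiv:2207.03229 — 7 statements merged into one kernel-verified Lean document; each statement's English description precedes it below -/
import Mathlib

section
/- Let T be a contraction on a Hilbert space H, and let Q = Q_{T*} be the positive square root of the SOT-limit of T^n T^{*n}. Then ‖Q T* h‖ = ‖Q h‖ for all h ∈ H; hence the densely defined map Qh ↦ Q T* h extends to an isometry of the closure of Ran Q into itself. -/
open ContinuousLinearMap Filter

private lemma key {H : Type*} [NormedAddCommGroup H] [InnerProductSpace ℂ H] [CompleteSpace H]
    (T : H →L[ℂ] H)
    (Q : H →L[ℂ] H) (hQ : Q.IsPositive)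
    (hQ2 : ∀ x : H, Tendsto (fun n : ℕ => ((T ^ n) ∘L ((adjoint T) ^ n)) x) atTop
      (nhds ((Q ∘L Q) x))) (x : H) :
    Tendsto (fun n : ℕ => ((‖((adjoint T ^ n)) x‖ : ℂ) ^ 2)) atTop
      (nhds ((‖Q x‖ : ℂ) ^ 2)) := by
  have h1 : Tendsto (fun n : ℕ => (inner ℂ (((T ^ n) ∘L ((adjoint T) ^ n)) x) x : ℂ)) atTop
      (nhds (inner ℂ ((Q ∘L Q) x) x)) := by
    exact (hQ2 x).inner tendsto_const_nhds
  have e1 : ∀ n : ℕ, (inner ℂ (((T ^ n) ∘L ((adjoint T) ^ n)) x) x : ℂ)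
      = (‖((adjoint T ^ n)) x‖ : ℂ) ^ 2 := by
    intro n
    have hpow : adjoint (T ^ n) = adjoint T ^ n := by
      simp [← star_eq_adjoint, star_pow]
    rw [comp_apply, ← hpow, ← adjoint_inner_right, hpow, inner_self_eq_norm_sq_to_K]; norm_cast
  have e2 : (inner ℂ ((Q ∘L Q) x) x : ℂ) = (‖Q x‖ : ℂ) ^ 2 := by
    rw [comp_apply]
    nth_rewrite 1 [← hQ.isSelfAdjoint.adjoint_eq]
    rw [adjoint_inner_left, inner_self_eq_norm_sq_to_K]; norm_cast
  rw [e2] at h1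
  exact h1.congr e1

/-- For a contraction `T` and `Q` the positive square root of the SOT-limit of
`T^n T^{*n}`, one has `‖Q T* h‖ = ‖Q h‖` for all `h`. -/
theorem stmt3 {H : Type*} [NormedAddCommGroup H] [InnerProductSpace ℂ H] [CompleteSpace H]
    (T : H →L[ℂ] H) (hT : ‖T‖ ≤ 1)
    (Q : H →L[ℂ] H) (hQ : Q.IsPositive)
    (hQ2 : ∀ x : H, Tendsto (fun n : ℕ => ((T ^ n) ∘L ((adjoint T) ^ n)) x) atTop
      (nhds ((Q ∘L Q) x))) :
    ∀ h : H, ‖Q (adjoint T h)‖ = ‖Q h‖ := by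
  intro h
  have h1 := key T Q hQ hQ2 (adjoint T h)
  have h2 := key T Q hQ hQ2 h
  have h2' : Tendsto (fun n : ℕ => ((‖((adjoint T ^ (n + 1))) h‖ : ℂ) ^ 2)) atTop
      (nhds ((‖Q h‖ : ℂ) ^ 2)) := by
    exact (tendsto_add_atTop_iff_nat 1).mpr h2
  have h1' : Tendsto (fun n : ℕ => ((‖((adjoint T ^ (n + 1))) h‖ : ℂ) ^ 2)) atTop
      (nhds ((‖Q (adjoint T h)‖ : ℂ) ^ 2)) := by
    refine h1.congr fun n => ?_
    have : (adjoint T ^ (n + 1)) h = (adjoint T ^ n) ((adjoint T) h) := by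
      rw [pow_succ]; rfl
    rw [this]
  have := tendsto_nhds_unique h1' h2'
  have : (‖Q (adjoint T h)‖ : ℝ) ^ 2 = ‖Q h‖ ^ 2 := by
    exact_mod_cast this
  calc ‖Q (adjoint T h)‖ = Real.sqrt (‖Q (adjoint T h)‖ ^ 2) := (Real.sqrt_sq (norm_nonneg _)).symm
    _ = Real.sqrt (‖Q h‖ ^ 2) := by rw [this]
    _ = ‖Q h‖ := Real.sqrt_sq (norm_nonneg _)
end

section
/- Let T be a contraction on a Hilbert space H, and let A ∈ B(H) be a contraction commuting with T. Let Q be the positive square root of SOT-lim T^n T^{*n}. Then ⟨A Q² A* h, h⟩ ≤ ⟨Q² h, h⟩ for all h ∈ H, i.e. A Q² A* ≤ Q² in the Loewner order; consequently ‖Q A* h‖ ≤ ‖Q h‖ for all h. -/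
open ContinuousLinearMap Filter

/-- For a contraction `T`, a contraction `A` commuting with `T`, and `Q` the positive
square root of the SOT-limit of `T^n T^{*n}`, one has `A Q² A* ≤ Q²` in the Loewner
order, and consequently `‖Q A* h‖ ≤ ‖Q h‖`. -/
theorem stmt4 {H : Type*} [NormedAddCommGroup H] [InnerProductSpace ℂ H] [CompleteSpace H]
    (T A : H →L[ℂ] H) (hT : ‖T‖ ≤ 1) (hA : ‖A‖ ≤ 1) (hAT : A ∘L T = T ∘L A)
    (Q : H →L[ℂ] H) (hQ : Q.IsPositive)
    (hQ2 : ∀ x : H, Tendsto (fun n : ℕ => ((T ^ n) ∘L ((adjoint T) ^ n)) x) atTop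
      (nhds ((Q ∘L Q) x))) :
    (∀ h : H, ((inner ℂ ((A ∘L (Q ∘L Q) ∘L adjoint A) h) h : ℂ)).re ≤
        ((inner ℂ ((Q ∘L Q) h) h : ℂ)).re) ∧
      ∀ h : H, ‖Q (adjoint A h)‖ ≤ ‖Q h‖ := by
  have hQsa : adjoint Q = Q := hQ.isSelfAdjoint.adjoint_eq
  -- adjoint commutation
  have hcomm : (adjoint A) ∘L (adjoint T) = (adjoint T) ∘L (adjoint A) := by
    have := congrArg adjoint hAT
    rw [adjoint_comp, adjoint_comp] at this
    exact this.symm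
  have hc : Commute (adjoint A) (adjoint T) := hcomm
  have hcommn : ∀ n : ℕ, (adjoint A) ∘L ((adjoint T) ^ n) =
      ((adjoint T) ^ n) ∘L (adjoint A) := fun n => (hc.pow_right n).eq
  have hAadj : ‖adjoint A‖ ≤ 1 := by
    rw [show ‖adjoint A‖ = ‖A‖ from LinearIsometryEquiv.norm_map adjoint A]; exact hA
  -- value at each n
  have hval : ∀ (n : ℕ) (x : H),
      ((inner ℂ (((T ^ n) ∘L ((adjoint T) ^ n)) x) x : ℂ)).re = ‖((adjoint T) ^ n) x‖ ^ 2 := by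
    intro n x
    have : (T ^ n) = adjoint ((adjoint T) ^ n) := by
      simp [← star_eq_adjoint, ← star_pow]
    rw [comp_apply, this, adjoint_inner_left, inner_self_eq_norm_sq_to_K]
    norm_cast
  -- pointwise inequality
  have hptwise : ∀ (n : ℕ) (h : H),
      ((inner ℂ (((T ^ n) ∘L ((adjoint T) ^ n)) (adjoint A h)) (adjoint A h) : ℂ)).re ≤
      ((inner ℂ (((T ^ n) ∘L ((adjoint T) ^ n)) h) h : ℂ)).re := by
    intro n h
    rw [hval, hval]
    have e : ((adjoint T) ^ n) (adjoint A h) = (adjoint A) (((adjoint T) ^ n) h) := by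
      have := congrFun (congrArg DFunLike.coe (hcommn n)) h
      simpa using this.symm
    rw [e]
    have hle : ‖(adjoint A) (((adjoint T) ^ n) h)‖ ≤ ‖((adjoint T) ^ n) h‖ := by
      calc ‖(adjoint A) (((adjoint T) ^ n) h)‖ ≤ ‖adjoint A‖ * ‖((adjoint T) ^ n) h‖ :=
            le_opNorm _ _
        _ ≤ 1 * ‖((adjoint T) ^ n) h‖ := by
            exact mul_le_mul_of_nonneg_right hAadj (norm_nonneg _)
        _ = ‖((adjoint T) ^ n) h‖ := one_mul _
    exact pow_le_pow_left₀ (norm_nonneg _) hle 2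
  -- limit inequality
  have key : ∀ h : H, ((inner ℂ ((Q ∘L Q) (adjoint A h)) (adjoint A h) : ℂ)).re ≤
      ((inner ℂ ((Q ∘L Q) h) h : ℂ)).re := by
    intro h
    have l1 : Tendsto (fun n : ℕ =>
        ((inner ℂ (((T ^ n) ∘L ((adjoint T) ^ n)) (adjoint A h)) (adjoint A h) : ℂ)).re) atTop
        (nhds (((inner ℂ ((Q ∘L Q) (adjoint A h)) (adjoint A h) : ℂ)).re)) := by
      exact (Complex.continuous_re.tendsto _).comp
        (((continuous_inner.comp (Continuous.prodMk (continuous_id) (continuous_const))).tendsto _).comp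
          (hQ2 (adjoint A h)))
    have l2 : Tendsto (fun n : ℕ =>
        ((inner ℂ (((T ^ n) ∘L ((adjoint T) ^ n)) h) h : ℂ)).re) atTop
        (nhds (((inner ℂ ((Q ∘L Q) h) h : ℂ)).re)) := by
      exact (Complex.continuous_re.tendsto _).comp
        (((continuous_inner.comp (Continuous.prodMk (continuous_id) (continuous_const))).tendsto _).comp
          (hQ2 h))
    exact le_of_tendsto_of_tendsto' l1 l2 (fun n => hptwise n h)
  -- Q² inner equals norm sq
  have hQnorm : ∀ x : H, ((inner ℂ ((Q ∘L Q) x) x : ℂ)).re = ‖Q x‖ ^ 2 := by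
    intro x
    rw [comp_apply, ← hQsa, adjoint_inner_left, hQsa, inner_self_eq_norm_sq_to_K]
    norm_cast
  constructor
  · intro h
    have e : ((inner ℂ ((A ∘L (Q ∘L Q) ∘L adjoint A) h) h : ℂ)).re =
        ((inner ℂ ((Q ∘L Q) (adjoint A h)) (adjoint A h) : ℂ)).re := by
      rw [comp_apply, comp_apply, ← adjoint_inner_right]
    rw [e]
    exact key h
  · intro h
    have := key h
    rw [hQnorm, hQnorm] at this
    exact (pow_le_pow_iff_left₀ (norm_nonneg _) (norm_nonneg _) two_ne_zero).mp this
end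

section
/- Let T be a contraction on a Hilbert space H. Then for all h ∈ H one has ‖h‖² = Σ_{n=0}^∞ ‖D_{T*} T^{*n} h‖² + lim_{n→∞} ‖T^{*n} h‖², where D_{T*} = (I − TT*)^{1/2}. In particular the map h ↦ ((D_{T*}T^{*n}h)_{n≥0}, Qh) into ℓ²(H) ⊕ H is an isometry, where Q² = SOT-lim T^n T^{*n}. -/
open ContinuousLinearMap Filter

/-- For a contraction `T`, with `D_{T*} = (I - TT*)^{1/2}` and `Q` the positive square
root of the SOT-limit of `T^n T^{*n}`, one has
`‖h‖² = Σₙ ‖D_{T*} T^{*n} h‖² + limₙ ‖T^{*n} h‖²`, the limit being `‖Q h‖²`. -/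
theorem stmt5 {H : Type*} [NormedAddCommGroup H] [InnerProductSpace ℂ H] [CompleteSpace H]
    (T Dst Q : H →L[ℂ] H) (hT : ‖T‖ ≤ 1)
    (hDst : Dst.IsPositive) (hDst2 : Dst ∘L Dst = 1 - T ∘L adjoint T)
    (hQ : Q.IsPositive)
    (hQ2 : ∀ x : H, Tendsto (fun n : ℕ => ((T ^ n) ∘L ((adjoint T) ^ n)) x) atTop
      (nhds ((Q ∘L Q) x)))
    (h : H) :
    HasSum (fun n : ℕ => ‖Dst (((adjoint T) ^ n) h)‖ ^ 2) (‖h‖ ^ 2 - ‖Q h‖ ^ 2) ∧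
      Tendsto (fun n : ℕ => ‖((adjoint T) ^ n) h‖ ^ 2) atTop (nhds (‖Q h‖ ^ 2)) := by
  have hpow : ∀ n : ℕ, (adjoint T) ^ n = adjoint (T ^ n) := by
    intro n
    rw [← star_eq_adjoint, ← star_eq_adjoint, ← star_pow]
  have renorm : ∀ x : H, (inner ℂ x x : ℂ).re = ‖x‖ ^ 2 := fun x => by
    rw [inner_self_eq_norm_sq_to_K]; norm_cast
  -- key identity: ‖Dst x‖² = ‖x‖² - ‖T* x‖²
  have key : ∀ x : H, ‖Dst x‖ ^ 2 = ‖x‖ ^ 2 - ‖adjoint T x‖ ^ 2 := by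
    intro x
    have h1 : (inner ℂ (Dst x) (Dst x) : ℂ) = inner ℂ ((Dst ∘L Dst) x) x := by
      simp only [comp_apply]
      rw [← adjoint_inner_left, hDst.isSelfAdjoint.adjoint_eq]
    have h2 : ((Dst ∘L Dst) x) = x - T (adjoint T x) := by
      rw [hDst2]; simp
    have h3 : (inner ℂ (T (adjoint T x)) x : ℂ) = inner ℂ (adjoint T x) (adjoint T x) := by
      rw [← adjoint_inner_right]
    have := congrArg Complex.re h1
    rw [h2, inner_sub_left, h3] at this
    rw [← renorm, ← renorm, ← renorm, this, Complex.sub_re]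
  -- the limit part
  have hlim : Tendsto (fun n : ℕ => ‖((adjoint T) ^ n) h‖ ^ 2) atTop (nhds (‖Q h‖ ^ 2)) := by
    have heq : ∀ n : ℕ, ‖((adjoint T) ^ n) h‖ ^ 2 =
        Complex.re (inner ℂ (((T ^ n) ∘L ((adjoint T) ^ n)) h) h) := by
      intro n
      simp only [comp_apply]
      rw [← adjoint_inner_right, ← hpow, renorm]
    have hQh : Complex.re (inner ℂ ((Q ∘L Q) h) h) = ‖Q h‖ ^ 2 := by
      simp only [comp_apply]
      rw [← adjoint_inner_right, hQ.isSelfAdjoint.adjoint_eq, renorm]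
    simp only [funext heq, ← hQh]
    exact ((Complex.continuous_re.comp
      (Continuous.inner continuous_id continuous_const)).tendsto _).comp (hQ2 h)
  refine ⟨?_, hlim⟩
  -- a n := ‖T*^n h‖²  is the sequence; term n = a n - a (n+1)
  set a : ℕ → ℝ := fun n => ‖((adjoint T) ^ n) h‖ ^ 2 with ha
  have hterm : ∀ n : ℕ, ‖Dst (((adjoint T) ^ n) h)‖ ^ 2 = a n - a (n + 1) := by
    intro n
    rw [key]
    congr 1
    simp only [ha, pow_succ', ContinuousLinearMap.mul_apply]
  have hnonneg : ∀ n : ℕ, 0 ≤ ‖Dst (((adjoint T) ^ n) h)‖ ^ 2 := fun n => sq_nonneg _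
  rw [hasSum_iff_tendsto_nat_of_nonneg hnonneg]
  have hsum : ∀ n : ℕ, ∑ i ∈ Finset.range n, ‖Dst (((adjoint T) ^ i) h)‖ ^ 2 = a 0 - a n := by
    intro n
    simp only [hterm]
    exact Finset.sum_range_sub' a n
  simp only [hsum]
  have ha0 : a 0 = ‖h‖ ^ 2 := by simp [ha]
  rw [ha0]
  exact tendsto_const_nhds.sub hlim
end

section
/- Let T be an isometry on a Hilbert space H and let A, B ∈ B(H) satisfy A = B*T and B = A*T. Then the 2×2 block operator X₁ = [[0, A],[B, 0]] on H ⊕ H is hyponormal, i.e. X₁X₁* ≤ X₁*X₁ in the Loewner order. -/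
open ContinuousLinearMap

/-- The block operator `X₁ = [[0, A],[B, 0]]` on the Hilbert space `H ⊕₂ H`,
acting by `(h, k) ↦ (A k, B h)`. -/
noncomputable def blockX {H : Type*} [NormedAddCommGroup H] [InnerProductSpace ℂ H]
    [CompleteSpace H] (A B : H →L[ℂ] H) :
    WithLp 2 (H × H) →L[ℂ] WithLp 2 (H × H) :=
  ((WithLp.prodContinuousLinearEquiv 2 ℂ H H).symm :
      (H × H) →L[ℂ] WithLp 2 (H × H)) ∘L
    ((A ∘L ContinuousLinearMap.snd ℂ H H).prod (B ∘L ContinuousLinearMap.fst ℂ H H)) ∘L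
    ((WithLp.prodContinuousLinearEquiv 2 ℂ H H) :
      WithLp 2 (H × H) →L[ℂ] H × H)


section Aux

variable {H : Type*} [NormedAddCommGroup H] [InnerProductSpace ℂ H] [CompleteSpace H]

lemma blockX_fst (A B : H →L[ℂ] H) (x : WithLp 2 (H × H)) : (blockX A B x).fst = A x.snd := rfl

lemma blockX_snd (A B : H →L[ℂ] H) (x : WithLp 2 (H × H)) : (blockX A B x).snd = B x.fst := rfl

lemma adjoint_blockX (A B : H →L[ℂ] H) :
    adjoint (blockX A B) = blockX (adjoint B) (adjoint A) := by
  symm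
  rw [eq_adjoint_iff]
  intro x y
  simp only [WithLp.prod_inner_apply, WithLp.ofLp_fst, WithLp.ofLp_snd, blockX_fst, blockX_snd, adjoint_inner_left]
  ring

lemma ringKey {R : Type*} [Ring R] [StarRing R] (a b t : R) (hT : star t * t = 1)
    (hA : a = star b * t) :
    star b * b - a * star a = star ((1 - t * star t) * b) * ((1 - t * star t) * b) := by
  have hq : (t * star t) * (t * star t) = t * star t := by
    calc (t * star t) * (t * star t) = t * ((star t * t) * star t) := by noncomm_ring
      _ = t * star t := by rw [hT, one_mul]
  subst hA
  simp only [star_mul, star_sub, star_star, star_one]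
  have expand : (star b * (1 - t * star t)) * ((1 - t * star t) * b)
      = star b * b - 2 • (star b * ((t * star t) * b))
        + star b * (((t * star t) * (t * star t)) * b) := by noncomm_ring
  rw [expand, hq]
  noncomm_ring

lemma key1 (A B T : H →L[ℂ] H) (hT : adjoint T ∘L T = 1) (hA : A = adjoint B ∘L T) :
    adjoint B ∘L B - A ∘L adjoint A
      = adjoint ((1 - T ∘L adjoint T) ∘L B) ∘L ((1 - T ∘L adjoint T) ∘L B) := by
  have := ringKey A B T (by simpa only [star_eq_adjoint, mul_def] using hT)
    (by simpa only [star_eq_adjoint, mul_def] using hA)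
  simpa only [star_eq_adjoint, mul_def] using this

end Aux

/-- If `T` is an isometry and `A = B*T`, `B = A*T`, then `X₁ = [[0, A],[B, 0]]` is
hyponormal: `X₁X₁* ≤ X₁*X₁`. -/
theorem stmt9 {H : Type*} [NormedAddCommGroup H] [InnerProductSpace ℂ H] [CompleteSpace H]
    (A B T : H →L[ℂ] H) (hT : adjoint T ∘L T = 1)
    (hA : A = adjoint B ∘L T) (hB : B = adjoint A ∘L T) :
    (adjoint (blockX A B) ∘L blockX A B - blockX A B ∘L adjoint (blockX A B)).IsPositive := by
  set Y : WithLp 2 (H × H) →L[ℂ] WithLp 2 (H × H) :=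
    blockX ((1 - T ∘L adjoint T) ∘L A) ((1 - T ∘L adjoint T) ∘L B) with hY
  have hD : adjoint (blockX A B) ∘L blockX A B - blockX A B ∘L adjoint (blockX A B)
      = adjoint Y ∘L Y := by
    ext x
    rw [hY, adjoint_blockX, adjoint_blockX]
    refine WithLp.ofLp_injective (p := 2) (Prod.ext ?_ ?_)
    · simpa only [sub_apply, comp_apply, WithLp.ofLp_fst, WithLp.sub_fst, blockX_fst, blockX_snd]
        using DFunLike.congr_fun (key1 A B T hT hA) x.fst
    · simpa only [sub_apply, comp_apply, WithLp.ofLp_snd, WithLp.sub_snd, blockX_fst, blockX_snd]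
        using DFunLike.congr_fun (key1 B A T hT hB) x.snd
  rw [hD]
  have h := (isPositive_one (E := WithLp 2 (H × H))).adjoint_conj Y
  simpa [one_def] using h
end

section
/- Let (A, B, T) be a pseudo-commutative tetrablock isometry on a Hilbert space H, i.e. T is an isometry, AT = TA, BT = TB, and A = B*T (equivalently B = A*T). Then the spectral radius of the product AB satisfies r(AB) = max{‖A‖², ‖B‖²}. -/
open ContinuousLinearMap

lemma re_inner_smul_right' {H : Type*} [NormedAddCommGroup H] [InnerProductSpace ℂ H]
    (u v : H) (r : ℝ) :
    RCLike.re (@inner ℂ H _ u (r • v)) = r * RCLike.re (@inner ℂ H _ u v) := by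
  rw [show r • v = (r : ℂ) • v from RCLike.real_smul_eq_coe_smul (K := ℂ) r v, inner_smul_right]
  simp

/-- Key quantitative bound: if `T` is an isometry, `S` has norm `‖B‖²`,
`⟨S y, y⟩ = ‖B y‖²`, and `B` commutes with powers of `T`, then
`(‖B‖²)^(n+1) ≤ ‖B‖² * ‖(S T)^n‖`. -/
lemma key_pow_bound {H : Type*} [NormedAddCommGroup H] [InnerProductSpace ℂ H] [CompleteSpace H]
    (B T S : H →L[ℂ] H)
    (hTx : ∀ x : H, ‖T x‖ = ‖x‖)
    (hSnorm : ‖S‖ = ‖B‖ ^ 2)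
    (hSy : ∀ y : H, RCLike.re (@inner ℂ H _ (S y) y) = ‖B y‖ ^ 2)
    (hBTk : ∀ k : ℕ, B * T ^ k = T ^ k * B) :
    ∀ n : ℕ, (‖B‖ ^ 2) ^ (n + 1) ≤ ‖B‖ ^ 2 * ‖(S * T) ^ n‖ := by
  intro n
  set l : ℝ := ‖B‖ ^ 2 with hl
  have hl0 : 0 ≤ l := sq_nonneg _
  have hTk : ∀ (k : ℕ) (z : H), ‖(T ^ k) z‖ = ‖z‖ := by
    intro k
    induction k with
    | zero => intro z; simp
    | succ k ih =>
      intro z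
      rw [pow_succ, ContinuousLinearMap.mul_apply, ih (T z), hTx]
  have hBk : ∀ (k : ℕ) (z : H), ‖B ((T ^ k) z)‖ = ‖B z‖ := by
    intro k z
    have h1 : B ((T ^ k) z) = (T ^ k) (B z) := by
      have := congrArg (fun f : H →L[ℂ] H => f z) (hBTk k)
      simpa [mul_apply] using this
    rw [h1, hTk]
  rcases eq_or_lt_of_le hl0 with h0 | hlpos
  · rw [← h0]
    simp [zero_pow]
  · have hBne : ‖B‖ ≠ 0 := by
      intro h
      rw [hl, h] at hlpos
      simp at hlpos
    have hB0 : 0 < ‖B‖ := lt_of_le_of_ne (norm_nonneg B) (Ne.symm hBne)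
    have hmain : ∀ c : ℝ, 0 ≤ c → c < ‖B‖ →
        l ^ (n + 1) * (c / ‖B‖) - n * l ^ n * Real.sqrt (2 * l * (l - c ^ 2))
          ≤ l * ‖(S * T) ^ n‖ := by
      intro c hc0 hc
      obtain ⟨x, hx1, hxc⟩ := exists_lt_apply_of_lt_opNorm B hc
      have hcsq : c ^ 2 ≤ l := by
        rw [hl]
        nlinarith [mul_le_mul hc.le hc.le hc0 (norm_nonneg B)]
      set δ := Real.sqrt (2 * l * (l - c ^ 2)) with hδ
      have hδ0 : 0 ≤ δ := Real.sqrt_nonneg _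
      have hδsq : δ ^ 2 = 2 * l * (l - c ^ 2) := by
        rw [hδ, Real.sq_sqrt (by nlinarith)]
      have hstep : ∀ k : ℕ, ‖S ((T ^ k) x) - l • ((T ^ k) x)‖ ≤ δ := by
        intro k
        set y := (T ^ k) x with hy
        have hyn : ‖y‖ ≤ 1 := by rw [hy, hTk]; exact hx1.le
        have hSy1 : ‖S y‖ ≤ l := by
          calc ‖S y‖ ≤ ‖S‖ * ‖y‖ := le_opNorm _ _
            _ ≤ l * 1 := by rw [hSnorm]; exact mul_le_mul_of_nonneg_left hyn hl0
            _ = l := mul_one l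
        have hre : c ^ 2 < RCLike.re (@inner ℂ H _ (S y) y) := by
          rw [hSy y, hy, hBk]
          exact pow_lt_pow_left₀ hxc hc0 (by norm_num)
        have hexp : ‖S y - l • y‖ ^ 2 ≤ δ ^ 2 := by
          have hns := norm_sub_sq (𝕜 := ℂ) (S y) (l • y)
          have hnorm_smul : ‖l • y‖ = l * ‖y‖ := by
            rw [norm_smul, Real.norm_eq_abs, abs_of_nonneg hl0]
          rw [hns, re_inner_smul_right', hnorm_smul, hδsq]
          have h3 : l * c ^ 2 ≤ l * RCLike.re (@inner ℂ H _ (S y) y) :=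
            mul_le_mul_of_nonneg_left hre.le hl0
          have h4 : ‖S y‖ ^ 2 ≤ l ^ 2 := pow_le_pow_left₀ (norm_nonneg (S y)) hSy1 2
          have h5 : (l * ‖y‖) ^ 2 ≤ l ^ 2 := pow_le_pow_left₀ (mul_nonneg hl0 (norm_nonneg y))
            (by simpa using mul_le_mul_of_nonneg_left hyn hl0) 2
          linarith
        have h7 := Real.sqrt_le_sqrt hexp
        rwa [Real.sqrt_sq (norm_nonneg _), Real.sqrt_sq hδ0] at h7
      have ind : ∀ k : ℕ, l * ‖((S * T) ^ k) x - l ^ k • ((T ^ k) x)‖ ≤ k * l ^ k * δ := by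
        intro k
        induction k with
        | zero => simp
        | succ k ih =>
          have happ : ((S * T) ^ (k + 1)) x = S (T (((S * T) ^ k) x)) := by
            rw [pow_succ', ContinuousLinearMap.mul_apply, ContinuousLinearMap.mul_apply]
          have happT : ((T : H →L[ℂ] H) ^ (k + 1)) x = T ((T ^ k) x) := by
            rw [pow_succ', ContinuousLinearMap.mul_apply]
          have e1 : ((S * T) ^ (k + 1)) x - l ^ (k + 1) • ((T ^ (k + 1)) x)
              = S (T (((S * T) ^ k) x) - l ^ k • T ((T ^ k) x))
                + l ^ k • (S ((T ^ (k + 1)) x) - l • ((T ^ (k + 1)) x)) := by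
            rw [happ, happT, map_sub, map_smul_of_tower, smul_sub, smul_smul, ← pow_succ]
            abel
          have hTsub : ‖T (((S * T) ^ k) x) - l ^ k • T ((T ^ k) x)‖
              = ‖((S * T) ^ k) x - l ^ k • ((T ^ k) x)‖ := by
            rw [← map_smul_of_tower, ← map_sub, hTx]
          have hb1 : ‖S (T (((S * T) ^ k) x) - l ^ k • T ((T ^ k) x))‖
              ≤ l * ‖((S * T) ^ k) x - l ^ k • ((T ^ k) x)‖ := by
            calc ‖S _‖ ≤ ‖S‖ * ‖T (((S * T) ^ k) x) - l ^ k • T ((T ^ k) x)‖ := le_opNorm _ _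
              _ = l * ‖((S * T) ^ k) x - l ^ k • ((T ^ k) x)‖ := by rw [hSnorm, hTsub]
          have hb2 : ‖l ^ k • (S ((T ^ (k + 1)) x) - l • ((T ^ (k + 1)) x))‖ ≤ l ^ k * δ := by
            rw [norm_smul, Real.norm_eq_abs, abs_of_nonneg (pow_nonneg hl0 k)]
            exact mul_le_mul_of_nonneg_left (hstep (k + 1)) (pow_nonneg hl0 k)
          have htri : ‖((S * T) ^ (k + 1)) x - l ^ (k + 1) • ((T ^ (k + 1)) x)‖
              ≤ l * ‖((S * T) ^ k) x - l ^ k • ((T ^ k) x)‖ + l ^ k * δ := by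
            rw [e1]
            exact le_trans (norm_add_le _ _) (add_le_add hb1 hb2)
          have hmull := mul_le_mul_of_nonneg_left htri hl0
          have hmulih := mul_le_mul_of_nonneg_left ih hl0
          calc l * ‖((S * T) ^ (k + 1)) x - l ^ (k + 1) • ((T ^ (k + 1)) x)‖
              ≤ l * (l * ‖((S * T) ^ k) x - l ^ k • ((T ^ k) x)‖ + l ^ k * δ) := hmull
            _ = l * (l * ‖((S * T) ^ k) x - l ^ k • ((T ^ k) x)‖) + l ^ k * l * δ := by ring
            _ ≤ l * (↑k * l ^ k * δ) + l ^ k * l * δ := by linarith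
            _ = (↑k + 1) * (l ^ k * l) * δ := by ring
            _ = (↑(k + 1) : ℝ) * l ^ (k + 1) * δ := by rw [pow_succ]; push_cast; ring
      have hxlow : c / ‖B‖ ≤ ‖x‖ := by
        rw [div_le_iff₀ hB0]
        calc c ≤ ‖B x‖ := hxc.le
          _ ≤ ‖B‖ * ‖x‖ := le_opNorm B x
          _ = ‖x‖ * ‖B‖ := mul_comm _ _
      have hyn : ‖l ^ n • ((T ^ n) x)‖ = l ^ n * ‖x‖ := by
        rw [norm_smul, Real.norm_eq_abs, abs_of_nonneg (pow_nonneg hl0 n), hTk]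
      have htri2 : l ^ n * ‖x‖
          ≤ ‖((S * T) ^ n) x‖ + ‖((S * T) ^ n) x - l ^ n • ((T ^ n) x)‖ := by
        have h8 := norm_sub_le (((S * T) ^ n) x) (((S * T) ^ n) x - l ^ n • ((T ^ n) x))
        have h9 : ((S * T) ^ n) x - (((S * T) ^ n) x - l ^ n • ((T ^ n) x))
            = l ^ n • ((T ^ n) x) := by abel
        rw [h9] at h8
        rw [← hyn]
        exact h8
      have hop : ‖((S * T) ^ n) x‖ ≤ ‖(S * T) ^ n‖ := by
        calc ‖((S * T) ^ n) x‖ ≤ ‖(S * T) ^ n‖ * ‖x‖ := le_opNorm _ _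
          _ ≤ ‖(S * T) ^ n‖ * 1 := mul_le_mul_of_nonneg_left hx1.le (norm_nonneg _)
          _ = _ := mul_one _
      have hindn := ind n
      have m1 : l * (l ^ n * (c / ‖B‖)) ≤ l * (l ^ n * ‖x‖) :=
        mul_le_mul_of_nonneg_left
          (mul_le_mul_of_nonneg_left hxlow (pow_nonneg hl0 n)) hl0
      have m2 : l * (l ^ n * ‖x‖)
          ≤ l * ‖((S * T) ^ n) x‖ + l * ‖((S * T) ^ n) x - l ^ n • ((T ^ n) x)‖ := by
        calc l * (l ^ n * ‖x‖)
            ≤ l * (‖((S * T) ^ n) x‖ + ‖((S * T) ^ n) x - l ^ n • ((T ^ n) x)‖) :=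
              mul_le_mul_of_nonneg_left htri2 hl0
          _ = _ := by ring
      have m3 : l * ‖((S * T) ^ n) x‖ ≤ l * ‖(S * T) ^ n‖ :=
        mul_le_mul_of_nonneg_left hop hl0
      calc l ^ (n + 1) * (c / ‖B‖) - ↑n * l ^ n * δ
          = l * (l ^ n * (c / ‖B‖)) - ↑n * l ^ n * δ := by rw [pow_succ]; ring
        _ ≤ l * (l ^ n * ‖x‖) - ↑n * l ^ n * δ := by linarith
        _ ≤ (l * ‖((S * T) ^ n) x‖ + l * ‖((S * T) ^ n) x - l ^ n • ((T ^ n) x)‖)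
              - ↑n * l ^ n * δ := by linarith
        _ ≤ (l * ‖(S * T) ^ n‖ + l * ‖((S * T) ^ n) x - l ^ n • ((T ^ n) x)‖)
              - ↑n * l ^ n * δ := by linarith
        _ ≤ l * ‖(S * T) ^ n‖ := by linarith
    have hcont : Filter.Tendsto
        (fun c : ℝ => l ^ (n + 1) * (c / ‖B‖) - n * l ^ n * Real.sqrt (2 * l * (l - c ^ 2)))
        (nhdsWithin ‖B‖ (Set.Iio ‖B‖)) (nhds (l ^ (n + 1))) := by
      have hc : Continuous fun c : ℝ =>
          l ^ (n + 1) * (c / ‖B‖) - n * l ^ n * Real.sqrt (2 * l * (l - c ^ 2)) := by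
        fun_prop
      have h6 := hc.tendsto ‖B‖
      have heq : l ^ (n + 1) * (‖B‖ / ‖B‖) - n * l ^ n * Real.sqrt (2 * l * (l - ‖B‖ ^ 2))
          = l ^ (n + 1) := by
        rw [div_self hBne, ← hl, sub_self, mul_zero, Real.sqrt_zero]
        ring
      rw [heq] at h6
      exact tendsto_nhdsWithin_of_tendsto_nhds h6
    refine le_of_tendsto hcont ?_
    filter_upwards [Ioo_mem_nhdsLT_of_mem (Set.right_mem_Ioc.mpr hB0)] with c hc
    exact hmain c hc.1.le hc.2

/-- For a pseudo-commutative tetrablock isometry `(A, B, T)`, the spectral radius of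
`AB` equals `max{‖A‖², ‖B‖²}`. -/
theorem stmt11 {H : Type*} [NormedAddCommGroup H] [InnerProductSpace ℂ H] [CompleteSpace H]
    (A B T : H →L[ℂ] H) (hT : adjoint T ∘L T = 1)
    (hAT : A ∘L T = T ∘L A) (hBT : B ∘L T = T ∘L B)
    (hA : A = adjoint B ∘L T) :
    spectralRadius ℂ (A ∘L B) = max ((‖A‖₊ : ENNReal) ^ 2) ((‖B‖₊ : ENNReal) ^ 2) := by
  have hTx : ∀ x : H, ‖T x‖ = ‖x‖ := (norm_map_iff_adjoint_comp_self T).mpr hT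
  have hBeq : B = adjoint A ∘L T := by
    rw [hA, adjoint_comp, adjoint_adjoint, comp_assoc, hBT, ← comp_assoc, hT, one_def, id_comp]
  have hle : ∀ (X Y : H →L[ℂ] H), X = adjoint Y ∘L T → ‖X‖ ≤ ‖Y‖ := by
    intro X Y hX
    rw [hX]
    refine opNorm_le_bound _ (norm_nonneg Y) fun x => ?_
    rw [comp_apply]
    calc ‖adjoint Y (T x)‖ ≤ ‖adjoint Y‖ * ‖T x‖ := le_opNorm _ _
      _ = ‖Y‖ * ‖x‖ := by rw [hTx, LinearIsometryEquiv.norm_map]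
  have hnAB : ‖A‖ = ‖B‖ := le_antisymm (hle A B hA) (hle B A hBeq)
  have hBT' : B * T = T * B := by rw [mul_def, mul_def]; exact hBT
  have hBTk : ∀ k : ℕ, B * T ^ k = T ^ k * B := fun k => by
    have hc : Commute B T := hBT'
    exact hc.pow_right k
  have hSnorm : ‖adjoint B ∘L B‖ = ‖B‖ ^ 2 := by rw [norm_adjoint_comp_self, sq]
  have hSy : ∀ y : H, RCLike.re (@inner ℂ H _ ((adjoint B ∘L B) y) y) = ‖B y‖ ^ 2 := by
    intro y
    have h1 : @inner ℂ H _ ((adjoint B ∘L B) y) y = @inner ℂ H _ (B y) (B y) :=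
      adjoint_inner_left B y (B y)
    rw [h1, inner_self_eq_norm_sq]
  have hABS : A ∘L B = (adjoint B ∘L B) ∘L T := by
    rw [hA, comp_assoc, ← hBT, ← comp_assoc]
  have hABmul : A ∘L B = (adjoint B ∘L B) * T := by rw [hABS, mul_def]
  have key : ∀ n : ℕ, (‖B‖ ^ 2) ^ (n + 1) ≤ ‖B‖ ^ 2 * ‖(A ∘L B) ^ n‖ := by
    intro n
    rw [hABmul]
    exact key_pow_bound B T (adjoint B ∘L B) hTx hSnorm hSy hBTk n
  -- endgame
  have hnn : ‖A‖₊ = ‖B‖₊ := NNReal.coe_injective (by simpa using hnAB)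
  rw [hnn, max_self]
  have key2 : ∀ n : ℕ, 1 ≤ n → (‖B‖ ^ 2) ^ n ≤ ‖(A ∘L B) ^ n‖ := by
    intro n hn
    rcases eq_or_lt_of_le (sq_nonneg ‖B‖) with h0 | hpos
    · rw [← h0, zero_pow (by omega)]
      exact norm_nonneg _
    · have h := key n
      rw [pow_succ'] at h
      exact (mul_le_mul_iff_right₀ hpos).mp h
  have gel := spectrum.pow_nnnorm_pow_one_div_tendsto_nhds_spectralRadius (A ∘L B)
  have hpowfix : ∀ k : ℕ, 1 ≤ k →
      (((‖B‖₊ : ENNReal) ^ 2) ^ k) ^ (1 / (k : ℝ)) = (‖B‖₊ : ENNReal) ^ 2 := by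
    intro k hk
    have hk0 : (k : ℝ) ≠ 0 := Nat.cast_ne_zero.mpr (by omega)
    rw [← ENNReal.rpow_natCast (((‖B‖₊ : ENNReal) ^ 2)) k, ← ENNReal.rpow_mul,
      mul_one_div, div_self hk0, ENNReal.rpow_one]
  refine le_antisymm ?_ ?_
  · refine le_of_tendsto gel ?_
    filter_upwards [Filter.eventually_ge_atTop 1] with k hk
    have hub : ‖(A ∘L B) ^ k‖₊ ≤ (‖B‖₊ ^ 2) ^ k := by
      calc ‖(A ∘L B) ^ k‖₊ ≤ ‖A ∘L B‖₊ ^ k := nnnorm_pow_le' _ (by omega)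
        _ ≤ (‖A‖₊ * ‖B‖₊) ^ k := pow_le_pow_left' (opNNNorm_comp_le A B) k
        _ = (‖B‖₊ ^ 2) ^ k := by rw [hnn, sq]
    calc (‖(A ∘L B) ^ k‖₊ : ENNReal) ^ (1 / (k : ℝ))
        ≤ (((‖B‖₊ : ENNReal) ^ 2) ^ k) ^ (1 / (k : ℝ)) := by
          refine ENNReal.rpow_le_rpow ?_ (by positivity)
          exact_mod_cast ENNReal.coe_le_coe.mpr hub
      _ = (‖B‖₊ : ENNReal) ^ 2 := hpowfix k hk
  · refine ge_of_tendsto gel ?_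
    filter_upwards [Filter.eventually_ge_atTop 1] with k hk
    have hlb : (‖B‖₊ ^ 2) ^ k ≤ ‖(A ∘L B) ^ k‖₊ := by
      have h := key2 k hk
      rw [← NNReal.coe_le_coe]
      push_cast
      simpa using h
    calc (‖B‖₊ : ENNReal) ^ 2
        = (((‖B‖₊ : ENNReal) ^ 2) ^ k) ^ (1 / (k : ℝ)) := (hpowfix k hk).symm
      _ ≤ (‖(A ∘L B) ^ k‖₊ : ENNReal) ^ (1 / (k : ℝ)) := by
          refine ENNReal.rpow_le_rpow ?_ (by positivity)
          exact_mod_cast ENNReal.coe_le_coe.mpr hlb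
end

section
/- Let T be a contraction on a Hilbert space H with defect operator D_T = (I − T*T)^{1/2}, and let X, Y be bounded operators on the defect space 𝒟_T = closure(Ran D_T) satisfying X D_T + Y* D_T T = 0 and Y D_T + X* D_T T = 0 (as operators H → 𝒟_T). Then X = 0 and Y = 0. -/
open ContinuousLinearMap

local notation "⟪" x ", " y "⟫" => @inner ℂ _ _ x y

/-- If a continuous linear map vanishes on the range of `D` and on the orthogonal
complement of the closure of the range of `D`, it is zero. -/
lemma aux_zero14 {H : Type*} [NormedAddCommGroup H] [InnerProductSpace ℂ H] [CompleteSpace H]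
    (D F : H →L[ℂ] H)
    (hker : ∀ y ∈ ((LinearMap.range (D : H →ₗ[ℂ] H)).topologicalClosure : Submodule ℂ H)ᗮ, F y = 0)
    (h0 : ∀ h : H, F (D h) = 0) : F = 0 := by
  set K : Submodule ℂ H := (LinearMap.range (D : H →ₗ[ℂ] H)).topologicalClosure with hK
  haveI : CompleteSpace K :=
    (Submodule.isClosed_topologicalClosure _).completeSpace_coe
  have hKle : K ≤ LinearMap.ker (F : H →ₗ[ℂ] H) := by
    apply Submodule.topologicalClosure_minimal
    · rintro x ⟨h, rfl⟩
      exact h0 h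
    · exact isClosed_ker F
  ext h
  have h1 : F ((K.orthogonalProjectionOnto h : H)) = 0 := hKle (K.orthogonalProjectionOnto h).2
  have h2 : F (h - K.orthogonalProjectionOnto h) = 0 :=
    hker _ (K.sub_starProjection_mem_orthogonal h)
  have : F h = F ((K.orthogonalProjectionOnto h : H)) + F (h - K.orthogonalProjectionOnto h) := by
    rw [← map_add]
    congr 1
    abel
  rw [this, h1, h2, add_zero]
  rfl

/-- Let `T` be a contraction with defect operator `D = (I - T*T)^{1/2}` and defect space
`𝒟_T = closure (Ran D)`.  If `X`, `Y` are operators of `𝒟_T` (i.e. mapping `𝒟_T` into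
itself and vanishing on `𝒟_T^⊥`) satisfying `X D + Y* D T = 0` and `Y D + X* D T = 0`,
then `X = 0` and `Y = 0`. -/
theorem stmt14 {H : Type*} [NormedAddCommGroup H] [InnerProductSpace ℂ H] [CompleteSpace H]
    (T D X Y : H →L[ℂ] H) (hT : ‖T‖ ≤ 1)
    (hD : D.IsPositive) (hD2 : D ∘L D = 1 - adjoint T ∘L T)
    (hXran : ∀ x : H, X x ∈ (LinearMap.range (D : H →ₗ[ℂ] H)).topologicalClosure)
    (hXker : ∀ y ∈ ((LinearMap.range (D : H →ₗ[ℂ] H)).topologicalClosure : Submodule ℂ H)ᗮ, X y = 0)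
    (hYran : ∀ x : H, Y x ∈ (LinearMap.range (D : H →ₗ[ℂ] H)).topologicalClosure)
    (hYker : ∀ y ∈ ((LinearMap.range (D : H →ₗ[ℂ] H)).topologicalClosure : Submodule ℂ H)ᗮ, Y y = 0)
    (h1 : X ∘L D + adjoint Y ∘L (D ∘L T) = 0)
    (h2 : Y ∘L D + adjoint X ∘L (D ∘L T) = 0) :
    X = 0 ∧ Y = 0 := by
  have hDsa : adjoint D = D := hD.isSelfAdjoint.adjoint_eq
  -- ‖D u‖² = ‖u‖² - ‖T u‖²
  have hnorm : ∀ u : H, (‖D u‖ : ℝ)^2 = ‖u‖^2 - ‖T u‖^2 := by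
    intro u
    have e1 : ⟪D u, D u⟫ = ⟪u, (D ∘L D) u⟫ := by
      have e := adjoint_inner_right D u (D u)
      rw [hDsa] at e
      rw [comp_apply]
      exact e.symm
    rw [hD2] at e1
    have e2 : ⟪u, (1 - adjoint T ∘L T : H →L[ℂ] H) u⟫ = ⟪u, u⟫ - ⟪T u, T u⟫ := by
      rw [sub_apply, inner_sub_right, ContinuousLinearMap.one_apply, comp_apply, adjoint_inner_right]
    rw [e2] at e1
    rw [inner_self_eq_norm_sq_to_K, inner_self_eq_norm_sq_to_K, inner_self_eq_norm_sq_to_K] at e1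
    exact_mod_cast e1
  -- ‖D (T^n h)‖ → 0
  have htend : ∀ h : H, Filter.Tendsto (fun n : ℕ => ‖D ((T^n) h)‖) Filter.atTop (nhds 0) := by
    intro h
    set a : ℕ → ℝ := fun n => ‖(T^n) h‖^2 with ha
    have hanti : Antitone a := by
      apply antitone_nat_of_succ_le
      intro n
      have hle : ‖(T^(n+1)) h‖ ≤ ‖(T^n) h‖ := by
        rw [pow_succ']
        calc ‖(T * T^n) h‖ = ‖T ((T^n) h)‖ := rfl
          _ ≤ ‖T‖ * ‖(T^n) h‖ := T.le_opNorm _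
          _ ≤ 1 * ‖(T^n) h‖ := mul_le_mul_of_nonneg_right hT (norm_nonneg _)
          _ = ‖(T^n) h‖ := one_mul _
      exact pow_le_pow_left₀ (norm_nonneg _) hle 2
    have hbdd : BddBelow (Set.range a) := ⟨0, by rintro x ⟨n, rfl⟩; positivity⟩
    have hconv : Filter.Tendsto a Filter.atTop (nhds (⨅ n, a n)) :=
      tendsto_atTop_ciInf hanti hbdd
    have hconv' : Filter.Tendsto (fun n => a (n+1)) Filter.atTop (nhds (⨅ n, a n)) :=
      hconv.comp (Filter.tendsto_add_atTop_nat 1)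
    have hsq : Filter.Tendsto (fun n => ‖D ((T^n) h)‖^2) Filter.atTop (nhds 0) := by
      have heq : (fun n => ‖D ((T^n) h)‖^2) = fun n => a n - a (n+1) := by
        funext n
        have e : T ((T^n) h) = (T^(n+1)) h := by rw [pow_succ']; rfl
        rw [hnorm ((T^n) h), e]
      rw [heq]
      simpa using hconv.sub hconv'
    have := hsq.sqrt
    simpa [Real.sqrt_sq (norm_nonneg _)] using this
  -- pointwise consequences of h1, h2
  have h1' : ∀ h : H, X (D h) = -(adjoint Y (D (T h))) := by
    intro h
    have e := ContinuousLinearMap.ext_iff.1 h1 h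
    simp only [add_apply, comp_apply, zero_apply] at e
    exact eq_neg_of_add_eq_zero_left e
  have h2' : ∀ h : H, Y (D h) = -(adjoint X (D (T h))) := by
    intro h
    have e := ContinuousLinearMap.ext_iff.1 h2 h
    simp only [add_apply, comp_apply, zero_apply] at e
    exact eq_neg_of_add_eq_zero_left e
  -- key invariance identity
  have hkey : ∀ (h g : H), ⟪X (D h), D g⟫ = ⟪X (D (T h)), D (T g)⟫ := by
    intro h g
    calc ⟪X (D h), D g⟫ = ⟪-(adjoint Y (D (T h))), D g⟫ := by rw [h1' h]
      _ = -⟪adjoint Y (D (T h)), D g⟫ := by rw [inner_neg_left]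
      _ = -⟪D (T h), Y (D g)⟫ := by rw [adjoint_inner_left]
      _ = -⟪D (T h), -(adjoint X (D (T g)))⟫ := by rw [h2' g]
      _ = ⟪D (T h), adjoint X (D (T g))⟫ := by rw [inner_neg_right, neg_neg]
      _ = ⟪X (D (T h)), D (T g)⟫ := by rw [adjoint_inner_right]
  have hkeyn : ∀ (n : ℕ) (h g : H), ⟪X (D h), D g⟫ = ⟪X (D ((T^n) h)), D ((T^n) g)⟫ := by
    intro n
    induction n with
    | zero => intro h g; simp
    | succ n ih =>
      intro h g
      rw [ih h g, hkey ((T^n) h) ((T^n) g)]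
      have e1 : T ((T^n) h) = (T^(n+1)) h := by rw [pow_succ']; rfl
      have e2 : T ((T^n) g) = (T^(n+1)) g := by rw [pow_succ']; rfl
      rw [e1, e2]
  -- hence the inner products vanish
  have hinner0 : ∀ (h g : H), ⟪X (D h), D g⟫ = 0 := by
    intro h g
    have hb : ∀ n : ℕ, ‖⟪X (D h), D g⟫‖ ≤ ‖X‖ * ‖D ((T^n) h)‖ * ‖D ((T^n) g)‖ := by
      intro n
      rw [hkeyn n h g]
      calc ‖⟪X (D ((T^n) h)), D ((T^n) g)⟫‖
          ≤ ‖X (D ((T^n) h))‖ * ‖D ((T^n) g)‖ := norm_inner_le_norm _ _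
        _ ≤ (‖X‖ * ‖D ((T^n) h)‖) * ‖D ((T^n) g)‖ :=
            mul_le_mul_of_nonneg_right (X.le_opNorm _) (norm_nonneg _)
        _ = ‖X‖ * ‖D ((T^n) h)‖ * ‖D ((T^n) g)‖ := by ring
    have hlim : Filter.Tendsto (fun n : ℕ => ‖X‖ * ‖D ((T^n) h)‖ * ‖D ((T^n) g)‖)
        Filter.atTop (nhds 0) := by
      have := ((htend h).const_mul ‖X‖).mul (htend g)
      simpa using this
    have : ‖⟪X (D h), D g⟫‖ ≤ 0 :=
      ge_of_tendsto hlim (Filter.Eventually.of_forall fun n => hb n)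
    have : ‖⟪X (D h), D g⟫‖ = 0 := le_antisymm this (norm_nonneg _)
    exact norm_eq_zero.mp this
  -- X ∘ D = 0 pointwise
  have hXD0 : ∀ h : H, X (D h) = 0 := by
    intro h
    have hmem : X (D h) ∈ ((LinearMap.range (D : H →ₗ[ℂ] H)) : Submodule ℂ H)ᗮᗮ := by
      rw [Submodule.orthogonal_orthogonal_eq_closure]
      exact hXran (D h)
    have hmem' : X (D h) ∈ ((LinearMap.range (D : H →ₗ[ℂ] H)) : Submodule ℂ H)ᗮ := by
      rw [Submodule.mem_orthogonal]
      rintro u ⟨g, rfl⟩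
      have := hinner0 h g
      rw [← inner_conj_symm]
      change (starRingEnd ℂ) (⟪X (D h), D g⟫) = 0
      rw [this, map_zero]
    have : ⟪X (D h), X (D h)⟫ = 0 :=
      Submodule.inner_right_of_mem_orthogonal hmem' hmem
    exact inner_self_eq_zero.mp this
  have hX0 : X = 0 := aux_zero14 D X hXker hXD0
  have hYD0 : ∀ h : H, Y (D h) = 0 := by
    intro h
    rw [h2' h, hX0]
    simp
  exact ⟨hX0, aux_zero14 D Y hYker hYD0⟩
end

section
/- Let G₁, G₂ be bounded operators on a Hilbert space E such that the numerical radius ν(G₁ + z G₂) ≤ 1 for every z in the closed unit disk. Then also ν(G₁* + z G₂) ≤ 1 for every z in the closed unit disk. -/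
open ContinuousLinearMap

/-- The numerical radius of a bounded operator: `ν(X) = sup{|⟨Xx, x⟩| : ‖x‖ = 1}`. -/
noncomputable def numericalRadius {H : Type*} [NormedAddCommGroup H] [InnerProductSpace ℂ H]
    (X : H →L[ℂ] H) : ℝ :=
  ⨆ x : {x : H // ‖x‖ = 1}, ‖(inner ℂ (X x.1) x.1 : ℂ)‖

lemma term_le_nr {E : Type*} [NormedAddCommGroup E] [InnerProductSpace ℂ E]
    (X : E →L[ℂ] E) (x : E) (hx : ‖x‖ = 1) :
    ‖(inner ℂ (X x) x : ℂ)‖ ≤ numericalRadius X := by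
  have hb : BddAbove (Set.range fun y : {x : E // ‖x‖ = 1} => ‖(inner ℂ (X y.1) y.1 : ℂ)‖) := by
    refine ⟨‖X‖, ?_⟩
    rintro r ⟨y, rfl⟩
    calc ‖(inner ℂ (X y.1) y.1 : ℂ)‖ ≤ ‖X y.1‖ * ‖y.1‖ := norm_inner_le_norm _ _
      _ ≤ ‖X‖ * ‖y.1‖ * ‖y.1‖ := by gcongr; exact X.le_opNorm _
      _ = ‖X‖ := by rw [y.2]; ring
  exact le_ciSup hb ⟨x, hx⟩

/-- If `ν(G₁ + z G₂) ≤ 1` for every `z` in the closed unit disk, then also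
`ν(G₁* + z G₂) ≤ 1` for every `z` in the closed unit disk. -/
theorem stmt16 {E : Type*} [NormedAddCommGroup E] [InnerProductSpace ℂ E] [CompleteSpace E]
    (G₁ G₂ : E →L[ℂ] E)
    (h : ∀ z : ℂ, ‖z‖ ≤ 1 → numericalRadius (G₁ + z • G₂) ≤ 1) :
    ∀ z : ℂ, ‖z‖ ≤ 1 → numericalRadius (adjoint G₁ + z • G₂) ≤ 1 := by
  intro z hz
  apply Real.iSup_le _ zero_le_one
  rintro ⟨x, hx⟩
  set a : ℂ := inner ℂ (G₁ x) x with ha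
  set b : ℂ := inner ℂ (G₂ x) x with hb
  have key : (inner ℂ ((adjoint G₁ + z • G₂) x) x : ℂ)
      = starRingEnd ℂ a + starRingEnd ℂ z * b := by
    rw [add_apply, smul_apply, inner_add_left, inner_smul_left, adjoint_inner_left,
      ← inner_conj_symm x (G₁ x)]
  have hterm : ∀ w : ℂ, (inner ℂ ((G₁ + w • G₂) x) x : ℂ) = a + starRingEnd ℂ w * b := by
    intro w; simp [ha, hb, inner_add_left, inner_smul_left, mul_comm]
  by_cases hb0 : b = 0
  · have := (term_le_nr (G₁ + (0:ℂ) • G₂) x hx).trans (h 0 (by norm_num))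
    rw [hterm 0] at this
    simp only [key, hb0, mul_zero, add_zero, map_zero] at this ⊢
    simpa using this
  · set w : ℂ := starRingEnd ℂ z * b / starRingEnd ℂ b with hw
    have hwnorm : ‖w‖ ≤ 1 := by
      have : ‖w‖ = ‖z‖ := by
        have hbn : ‖b‖ ≠ 0 := by simpa using hb0
        rw [hw, norm_div, norm_mul, RCLike.norm_conj, RCLike.norm_conj]
        field_simp
      rw [this]; exact hz
    have h1 := (term_le_nr (G₁ + w • G₂) x hx).trans (h w hwnorm)
    rw [hterm w] at h1
    have heq : ‖(inner ℂ ((adjoint G₁ + z • G₂) x) x : ℂ)‖ = ‖a + starRingEnd ℂ w * b‖ := by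
      rw [key]
      have : a + starRingEnd ℂ w * b = starRingEnd ℂ (starRingEnd ℂ a + starRingEnd ℂ z * b) := by
        have hcb : starRingEnd ℂ b ≠ 0 := by simpa using hb0
        rw [hw, map_div₀, map_mul, Complex.conj_conj, Complex.conj_conj, map_add, Complex.conj_conj]
        field_simp
        rw [map_mul, Complex.conj_conj, mul_comm]
      rw [this, RCLike.norm_conj]
    rw [heq]; exact h1
end
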